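/- Let w₁, w₂ : ℝⁿ × ℝ → ℝ be functions, L₁ > 0, c ≠ 0, and s ∈ ℝ, such that w₁((x₁ + L₁, x₂,…,xₙ), ξ) = w₁(x, ξ) and similarly for w₂, for all x, ξ. If sup over (ξ, x₂,…,xₙ) of |w₁((ξ − c t, x₂,…,xₙ), ξ) − w₂((ξ − c t, x₂,…,xₙ), ξ + s)| → 0 as t → ∞, then w₁(x, ξ) = w₂(x, ξ + s) for all x ∈ ℝⁿ and ξ ∈ ℝ. -/

import Mathlib

lemma periodic_shift_int {n : ℕ} (i : Fin n) (w : (Fin n → ℝ) → ℝ → ℝ) (L : ℝ)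
    (hper : ∀ (x : Fin n → ℝ) (ξ : ℝ),
      w (Function.update x i (x i + L)) ξ = w x ξ) :
    ∀ (k : ℤ) (x : Fin n → ℝ) (ξ : ℝ),
      w (Function.update x i (x i + k * L)) ξ = w x ξ := by
  intro k
  induction k using Int.induction_on with
  | zero => intro x ξ; simp
  | succ m ih =>
    intro x ξ
    push_cast
    push_cast at ih
    have h1 : (x i + ((m : ℝ) + 1) * L) =
        (Function.update x i (x i + (m : ℝ) * L)) i + L := by
      simp [Function.update_self]; ring
    rw [h1]
    have h2 : Function.update x i ((Function.update x i (x i + (m : ℝ) * L)) i + L)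
        = Function.update (Function.update x i (x i + (m : ℝ) * L)) i
          ((Function.update x i (x i + (m : ℝ) * L)) i + L) := by
      simp [Function.update_idem]
    rw [h2, hper, ih]
  | pred m ih =>
    intro x ξ
    push_cast
    push_cast at ih
    have key := hper (Function.update x i (x i + (-(m : ℝ) - 1) * L)) ξ
    have h1 : (Function.update x i (x i + (-(m : ℝ) - 1) * L)) i + L
        = x i + (-(m : ℝ)) * L := by
      simp [Function.update_self]; ring
    rw [h1, Function.update_idem] at key
    rw [← ih x ξ, ← key]

theorem wave_profile_uniqueness (n : ℕ) (hn : 0 < n)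
    (w₁ w₂ : (Fin n → ℝ) → ℝ → ℝ)
    (L₁ : ℝ) (hL₁ : 0 < L₁) (c : ℝ) (hc : c ≠ 0) (s : ℝ)
    (hper₁ : ∀ (x : Fin n → ℝ) (ξ : ℝ),
      w₁ (Function.update x ⟨0, hn⟩ (x ⟨0, hn⟩ + L₁)) ξ = w₁ x ξ)
    (hper₂ : ∀ (x : Fin n → ℝ) (ξ : ℝ),
      w₂ (Function.update x ⟨0, hn⟩ (x ⟨0, hn⟩ + L₁)) ξ = w₂ x ξ)
    (hconv : ∀ ε > 0, ∃ T : ℝ, ∀ t ≥ T, ∀ (x : Fin n → ℝ) (ξ : ℝ),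
      |w₁ (Function.update x ⟨0, hn⟩ (ξ - c * t)) ξ -
        w₂ (Function.update x ⟨0, hn⟩ (ξ - c * t)) (ξ + s)| ≤ ε) :
    ∀ (x : Fin n → ℝ) (ξ : ℝ), w₁ x ξ = w₂ x (ξ + s) := by
  intro x ξ
  have key : ∀ ε > 0, |w₁ x ξ - w₂ x (ξ + s)| ≤ ε := by
    intro ε hε
    obtain ⟨T, hT⟩ := hconv ε hε
    set i : Fin n := ⟨0, hn⟩
    -- choose k so that t := (ξ - x i - k*L₁)/c ≥ T
    obtain ⟨k, hk⟩ : ∃ k : ℤ, (ξ - x i - k * L₁) / c ≥ T := by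
      rcases lt_or_gt_of_ne hc with hneg | hpos
      · refine ⟨⌈(ξ - x i - c * T) / L₁⌉, ?_⟩
        have h1 : (ξ - x i - c * T) / L₁ ≤ ⌈(ξ - x i - c * T) / L₁⌉ := Int.le_ceil _
        have h2 : ξ - x i - c * T ≤ (⌈(ξ - x i - c * T) / L₁⌉ : ℝ) * L₁ := by
          calc ξ - x i - c * T = (ξ - x i - c * T) / L₁ * L₁ := by
                field_simp
            _ ≤ _ := by nlinarith
        have h3 : ξ - x i - (⌈(ξ - x i - c * T) / L₁⌉ : ℝ) * L₁ ≤ c * T := by linarith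
        rw [ge_iff_le, le_div_iff_of_neg hneg]
        linarith
      · refine ⟨⌊(ξ - x i - c * T) / L₁⌋, ?_⟩
        have h1 : ((⌊(ξ - x i - c * T) / L₁⌋ : ℝ)) ≤ (ξ - x i - c * T) / L₁ :=
          Int.floor_le _
        have h2 : (⌊(ξ - x i - c * T) / L₁⌋ : ℝ) * L₁ ≤ ξ - x i - c * T := by
          calc (⌊(ξ - x i - c * T) / L₁⌋ : ℝ) * L₁
              ≤ (ξ - x i - c * T) / L₁ * L₁ := by nlinarith
            _ = ξ - x i - c * T := by field_simp
        rw [ge_iff_le, le_div_iff₀ hpos]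
        linarith
    set t : ℝ := (ξ - x i - k * L₁) / c
    have hct : ξ - c * t = x i + k * L₁ := by
      rw [show c * t = ξ - x i - k * L₁ from mul_div_cancel₀ _ hc]
      ring
    have := hT t hk x ξ
    rw [hct, periodic_shift_int i w₁ L₁ hper₁ k,
        periodic_shift_int i w₂ L₁ hper₂ k] at this
    exact this
  by_contra h
  have habs : 0 < |w₁ x ξ - w₂ x (ξ + s)| := abs_pos.mpr (sub_ne_zero.mpr h)
  have := key (|w₁ x ξ - w₂ x (ξ + s)| / 2) (by linarith)
  linarith
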